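/- arXiv:2307.05144 — 5 statements merged into one kernel-verified Lean document; each statement's English description precedes it below -/
import Mathlib

section
/- Let τ_L > |δ_L + 1| and τ_R < -|δ_R + 1|, let λ_L^u > 1 and λ_L^s ∈ (-1,1) be the eigenvalues of A_L = [[τ_L, 1], [-δ_L, 0]], and suppose φ₁ := δ_R - τ_R λ_L^u > 0. Define C₁ = 1 + φ₃/((λ_L^u - 1)φ₁) where φ₃ = δ_R - (δ_R + τ_R - (τ_R + 1)λ_L^u)λ_L^u, and set f(C) = (τ_R C₁ + 1, -δ_R C₁). Then f(C) lies on the line y = -λ_L^u x - λ_L^u/(λ_L^u - 1). -/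
theorem stmt_7 (τL δL τR δR : ℝ) (hL : τL > |δL + 1|) (hR : τR < -|δR + 1|)
    (lu ls : ℝ) (hrootu : lu ^ 2 - τL * lu + δL = 0) (hlu : lu > 1)
    (hroots : ls ^ 2 - τL * ls + δL = 0) (hls : ls ∈ Set.Ioo (-1 : ℝ) 1)
    (φ1 : ℝ) (hφ1 : φ1 = δR - τR * lu) (hφ1pos : φ1 > 0)
    (φ3 : ℝ) (hφ3 : φ3 = δR - (δR + τR - (τR + 1) * lu) * lu)
    (C1 : ℝ) (hC1 : C1 = 1 + φ3 / ((lu - 1) * φ1)) :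
    -δR * C1 = -lu * (τR * C1 + 1) - lu / (lu - 1) := by
  have h1 : lu - 1 ≠ 0 := by linarith
  have h2 : φ1 ≠ 0 := ne_of_gt hφ1pos
  subst hC1 hφ3 hφ1
  field_simp
  ring
end

section
/- Under the assumptions τ_L > |δ_L + 1|, τ_R < -|δ_R + 1|, and φ₁ := δ_R - τ_R λ_L^u > 0, the first coordinate of f(C) = (τ_R C₁ + 1, -δ_R C₁), namely ((τ_R + δ_R)(λ_L^u - 1) + τ_R)/((λ_L^u - 1)φ₁), is negative. -/
theorem stmt_8 (τL δL τR δR : ℝ) (hL : τL > |δL + 1|) (hR : τR < -|δR + 1|)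
    (lu : ℝ) (hrootu : lu ^ 2 - τL * lu + δL = 0) (hlu : lu > 1)
    (φ1 : ℝ) (hφ1 : φ1 = δR - τR * lu) (hφ1pos : φ1 > 0)
    (φ3 : ℝ) (hφ3 : φ3 = δR - (δR + τR - (τR + 1) * lu) * lu)
    (C1 : ℝ) (hC1 : C1 = 1 + φ3 / ((lu - 1) * φ1)) :
    τR * C1 + 1 = ((τR + δR) * (lu - 1) + τR) / ((lu - 1) * φ1) ∧
      ((τR + δR) * (lu - 1) + τR) / ((lu - 1) * φ1) < 0 := by
  have hlu1 : lu - 1 > 0 := by linarith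
  have hden : (lu - 1) * φ1 > 0 := mul_pos hlu1 hφ1pos
  have hτδ : τR + δR < -1 := by
    have := abs_nonneg (δR + 1)
    have := le_abs_self (δR + 1)
    linarith
  have hτ : τR < 0 := by
    have := abs_nonneg (δR + 1)
    linarith
  constructor
  · subst hC1 hφ3
    field_simp
    ring_nf
    nlinarith [hφ1, sq_nonneg lu]
  · apply div_neg_of_neg_of_pos _ hden
    nlinarith
end

section
/- Let τ_L, δ_L ∈ ℝ with τ_L > |δ_L + 1|, and suppose δ_L < τ_L²/4 and δ_L ≠ 0 so that the fixed-point equation -δ_L/(τ_L + m) = m has two real solutions. Then the solution r_L = -(τ_L/2)(1 + √(1 - 4δ_L/τ_L²)) satisfies r_L < (1 - δ_L² - τ_L²)/(2τ_L). -/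
theorem stmt_11 (τL δL : ℝ) (h : τL > |δL + 1|)
    (hδ : δL < τL ^ 2 / 4) (hδ0 : δL ≠ 0) :
    -(τL / 2) * (1 + Real.sqrt (1 - 4 * δL / τL ^ 2)) <
      (1 - δL ^ 2 - τL ^ 2) / (2 * τL) := by
  have hτ : 0 < τL := lt_of_le_of_lt (abs_nonneg _) h
  have habs := abs_lt.mp h
  have h4 : 0 < τL ^ 2 - 4 * δL := by nlinarith
  set t := Real.sqrt (τL ^ 2 - 4 * δL) with ht_def
  have ht : 0 < t := Real.sqrt_pos.mpr h4
  have ht2 : t ^ 2 = τL ^ 2 - 4 * δL := Real.sq_sqrt h4.le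
  have hs : Real.sqrt (1 - 4 * δL / τL ^ 2) = t / τL := by
    rw [show (1 - 4 * δL / τL ^ 2) = (τL ^ 2 - 4 * δL) / τL ^ 2 by
      field_simp, Real.sqrt_div h4.le, Real.sqrt_sq hτ.le]
  rw [hs]
  have key : δL ^ 2 - 1 < τL * t := by
    rcases le_or_gt (δL ^ 2) 1 with hle | hlt
    · nlinarith
    · have h1 : (δL + 1) ^ 2 < τL ^ 2 := by nlinarith [habs.1, habs.2]
      have h2 : (δL - 1) ^ 2 < t ^ 2 := by nlinarith
      have h3 : (δL + 1) ^ 2 * ((δL - 1) ^ 2) < τL ^ 2 * t ^ 2 :=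
        mul_lt_mul' h1.le h2 (sq_nonneg _) (by positivity)
      nlinarith [h3, mul_pos hτ ht]
  have expand : -(τL / 2) * (1 + t / τL) = (-(τL ^ 2) - τL * t) / (2 * τL) := by
    field_simp; ring
  rw [expand, div_lt_div_iff₀ (by positivity) (by positivity)]
  nlinarith [key]
end

section
/- Let τ_R, δ_R ∈ ℝ with τ_R < -|δ_R + 1|. Then r_R = -(τ_R/2)(1 + √(1 - 4δ_R/τ_R²)) satisfies r_R > (1 - δ_R² - τ_R²)/(2τ_R). -/
theorem stmt_12 (τR δR : ℝ) (h : τR < -|δR + 1|) :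
    -(τR / 2) * (1 + Real.sqrt (1 - 4 * δR / τR ^ 2)) >
      (1 - δR ^ 2 - τR ^ 2) / (2 * τR) := by
  have hτ : τR < 0 := lt_of_lt_of_le h (neg_nonpos.2 (abs_nonneg _))
  have hτne : τR ≠ 0 := ne_of_lt hτ
  have habs : |δR + 1| < -τR := by linarith [neg_lt_neg h]
  have hτ2 : (δR + 1) ^ 2 < τR ^ 2 := by
    nlinarith [abs_nonneg (δR + 1), sq_abs (δR + 1)]
  have hdisc : (δR - 1) ^ 2 < τR ^ 2 - 4 * δR := by nlinarith
  have hdn : 0 ≤ τR ^ 2 - 4 * δR := by nlinarith [sq_nonneg (δR - 1)]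
  set s := Real.sqrt (τR ^ 2 - 4 * δR) with hs_def
  have hs : s ^ 2 = τR ^ 2 - 4 * δR := Real.sq_sqrt hdn
  have hsb : |δR - 1| < s := by
    have := Real.sqrt_lt_sqrt (sq_nonneg (δR - 1)) hdisc
    rwa [Real.sqrt_sq_eq_abs] at this
  have hs0 : 0 ≤ s := Real.sqrt_nonneg _
  have hrw : Real.sqrt (1 - 4 * δR / τR ^ 2) = s / (-τR) := by
    have h1 : 1 - 4 * δR / τR ^ 2 = (τR ^ 2 - 4 * δR) / τR ^ 2 := by
      field_simp
    rw [h1, Real.sqrt_div hdn, Real.sqrt_sq_eq_abs, abs_of_neg hτ]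
  rw [hrw]
  have hform : -(τR / 2) * (1 + s / (-τR)) = (-τR + s) / 2 := by
    field_simp
    ring
  rw [hform, gt_iff_lt, div_lt_iff_of_neg (by linarith : 2 * τR < 0)]
  have key : |δR + 1| * |δR - 1| < (-τR) * s :=
    mul_lt_mul'' habs hsb (abs_nonneg _) (abs_nonneg _)
  have habs2 : δR ^ 2 - 1 ≤ |δR + 1| * |δR - 1| := by
    rw [← abs_mul]
    calc δR ^ 2 - 1 = (δR + 1) * (δR - 1) := by ring
      _ ≤ |(δR + 1) * (δR - 1)| := le_abs_self _
  nlinarith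
end

section
/- Let A = [[τ, 1], [-δ, 0]] be a real 2×2 matrix and let K = [a, b] be a compact interval. Define H(m) = τ² + δ² - 1 + 2τm. If H(a) > 0 and H(b) > 0, then there exists c > 1 such that ‖A v‖ ≥ c ‖v‖ for every vector v in the cone Ψ_K = {α (1, m) : α ∈ ℝ, m ∈ K}. -/
theorem stmt_13 (τ δ a b : ℝ) (hab : a ≤ b)
    (H : ℝ → ℝ) (hH : ∀ m, H m = τ ^ 2 + δ ^ 2 - 1 + 2 * τ * m)
    (hHa : H a > 0) (hHb : H b > 0) :
    ∃ c : ℝ, c > 1 ∧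
      ∀ v : ℝ × ℝ, (∃ α m : ℝ, m ∈ Set.Icc a b ∧ v = (α, α * m)) →
        Real.sqrt ((τ * v.1 + v.2) ^ 2 + (-δ * v.1) ^ 2) ≥
          c * Real.sqrt (v.1 ^ 2 + v.2 ^ 2) := by
  set h := min (H a) (H b) with hh
  have hhpos : 0 < h := lt_min hHa hHb
  set B := 1 + max (a ^ 2) (b ^ 2) with hB
  have hBpos : 0 < B := by positivity
  refine ⟨Real.sqrt (1 + h / B), ?_, ?_⟩
  · have h1 : (1 : ℝ) < 1 + h / B := by
      have : 0 < h / B := div_pos hhpos hBpos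
      linarith
    calc (1 : ℝ) = Real.sqrt 1 := Real.sqrt_one.symm
      _ < _ := Real.sqrt_lt_sqrt (by norm_num) h1
  · rintro v ⟨α, m, hm, rfl⟩
    simp only
    have hm1 : m ^ 2 ≤ max (a ^ 2) (b ^ 2) := by
      rcases le_or_gt 0 m with h0 | h0
      · exact le_max_of_le_right (by nlinarith [hm.1, hm.2])
      · exact le_max_of_le_left (by nlinarith [hm.1, hm.2])
    have hHm : h ≤ H m := by
      rcases le_or_gt 0 τ with h0 | h0
      · refine le_trans (min_le_left _ _) ?_
        rw [hH, hH]; nlinarith [hm.1]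
      · refine le_trans (min_le_right _ _) ?_
        rw [hH, hH]; nlinarith [hm.2]
    have hdiv : h / B * (1 + m ^ 2) ≤ H m := by
      refine le_trans ?_ hHm
      rw [div_mul_eq_mul_div, div_le_iff₀ hBpos]
      have : 1 + m ^ 2 ≤ B := by rw [hB]; linarith
      nlinarith
    have key : (1 + h / B) * (α ^ 2 + (α * m) ^ 2) ≤
        (τ * α + α * m) ^ 2 + (-δ * α) ^ 2 := by
      have hHm' : H m = τ ^ 2 + δ ^ 2 - 1 + 2 * τ * m := hH m
      nlinarith [mul_nonneg (sq_nonneg α) (sub_nonneg.2 hdiv)]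
    calc Real.sqrt (1 + h / B) * Real.sqrt (α ^ 2 + (α * m) ^ 2)
        = Real.sqrt ((1 + h / B) * (α ^ 2 + (α * m) ^ 2)) :=
          (Real.sqrt_mul (by positivity) _).symm
      _ ≤ _ := Real.sqrt_le_sqrt key
end
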